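/- Let $\Sigma_\infty \in S^d_{++}$ satisfy the algebraic Riccati equation $A\Sigma_\infty + \Sigma_\infty A^\top + \Sigma_B - \Sigma_\infty H^\top H \Sigma_\infty = 0$ with $\Sigma_B \succ 0$. Then every solution of $\dot y_t = (A - \tfrac{1}{2}\Sigma_\infty H^\top H)^\top y_t$ satisfies $y_t^\top \Sigma_\infty y_t \le e^{-2\beta t} y_0^\top \Sigma_\infty y_0$ where $\beta = \lambda_{\min}(\Sigma_B)/(2\lambda_{\max}(\Sigma_\infty))$. -/

import Mathlib

open Matrix Real

section quad
variable {d : ℕ} {S : Matrix (Fin d) (Fin d) ℝ} (hS : S.IsHermitian)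

lemma quad_decomp (x : Fin d → ℝ) :
    x ⬝ᵥ S.mulVec x =
      ∑ i, hS.eigenvalues i *
        ((star (hS.eigenvectorUnitary : Matrix (Fin d) (Fin d) ℝ)).mulVec x i) ^ 2 ∧
    x ⬝ᵥ x = ∑ i, ((star (hS.eigenvectorUnitary : Matrix (Fin d) (Fin d) ℝ)).mulVec x i) ^ 2 := by
  have hstar : star (hS.eigenvectorUnitary : Matrix (Fin d) (Fin d) ℝ) =
      (hS.eigenvectorUnitary : Matrix (Fin d) (Fin d) ℝ)ᵀ := by
    rw [Matrix.star_eq_conjTranspose, Matrix.conjTranspose_eq_transpose_of_trivial]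
  have hUU : (hS.eigenvectorUnitary : Matrix (Fin d) (Fin d) ℝ) *
      star (hS.eigenvectorUnitary : Matrix (Fin d) (Fin d) ℝ) = 1 :=
    (Matrix.mem_unitaryGroup_iff).mp hS.eigenvectorUnitary.2
  have hxU : star (hS.eigenvectorUnitary : Matrix (Fin d) (Fin d) ℝ) *ᵥ x =
      x ᵥ* (hS.eigenvectorUnitary : Matrix (Fin d) (Fin d) ℝ) := by
    rw [hstar, Matrix.mulVec_transpose]
  constructor
  · conv_lhs => rw [hS.spectral_theorem, Unitary.conjStarAlgAut_apply]
    rw [← Matrix.mulVec_mulVec, ← Matrix.mulVec_mulVec, dotProduct_mulVec, ← hxU]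
    simp only [Matrix.mulVec_diagonal, dotProduct, Function.comp_apply, RCLike.ofReal_real_eq_id,
      id]
    exact Finset.sum_congr rfl fun i _ => by ring
  · have h2 : (star (hS.eigenvectorUnitary : Matrix (Fin d) (Fin d) ℝ) *ᵥ x) ⬝ᵥ
        (star (hS.eigenvectorUnitary : Matrix (Fin d) (Fin d) ℝ) *ᵥ x) = x ⬝ᵥ x := by
      rw [dotProduct_mulVec, hstar, Matrix.vecMul_transpose, Matrix.mulVec_mulVec, ← hstar, hUU,
        Matrix.one_mulVec]
    rw [← h2]
    simp only [dotProduct]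
    exact Finset.sum_congr rfl fun i _ => by ring

lemma quad_lower [NeZero d] (x : Fin d → ℝ) :
    (⨅ i, hS.eigenvalues i) * (x ⬝ᵥ x) ≤ x ⬝ᵥ S.mulVec x := by
  obtain ⟨h1, h2⟩ := quad_decomp hS x
  rw [h1, h2, Finset.mul_sum]
  exact Finset.sum_le_sum fun i _ =>
    mul_le_mul_of_nonneg_right (ciInf_le (Set.Finite.bddBelow (Set.finite_range _)) i) (sq_nonneg _)

lemma quad_upper [NeZero d] (x : Fin d → ℝ) :
    x ⬝ᵥ S.mulVec x ≤ (⨆ i, hS.eigenvalues i) * (x ⬝ᵥ x) := by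
  obtain ⟨h1, h2⟩ := quad_decomp hS x
  rw [h1, h2, Finset.mul_sum]
  exact Finset.sum_le_sum fun i _ =>
    mul_le_mul_of_nonneg_right (le_ciSup (Set.Finite.bddAbove (Set.finite_range _)) i) (sq_nonneg _)

end quad

lemma hasDerivAt_quadform {d : ℕ} (S : Matrix (Fin d) (Fin d) ℝ) {y : ℝ → Fin d → ℝ}
    {v : Fin d → ℝ} {t : ℝ} (h : HasDerivAt y v t) :
    HasDerivAt (fun s => y s ⬝ᵥ S.mulVec (y s))
      (v ⬝ᵥ S.mulVec (y t) + y t ⬝ᵥ S.mulVec v) t := by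
  have hc : ∀ i, HasDerivAt (fun s => y s i) (v i) t := fun i => hasDerivAt_pi.mp h i
  have h1 : ∀ i, HasDerivAt (fun s => (S.mulVec (y s)) i) ((S.mulVec v) i) t := by
    intro i
    simp only [Matrix.mulVec, dotProduct]
    exact HasDerivAt.fun_sum fun j _ => (hc j).const_mul _
  have h2 : HasDerivAt (fun s => ∑ i, y s i * (S.mulVec (y s)) i)
      (∑ i, (v i * (S.mulVec (y t)) i + y t i * (S.mulVec v) i)) t :=
    HasDerivAt.fun_sum fun i _ => (hc i).fun_mul (h1 i)
  have e1 : (fun s => y s ⬝ᵥ S.mulVec (y s)) = fun s => ∑ i, y s i * (S.mulVec (y s)) i := rfl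
  have e2 : v ⬝ᵥ S.mulVec (y t) + y t ⬝ᵥ S.mulVec v
      = ∑ i, (v i * (S.mulVec (y t)) i + y t i * (S.mulVec v) i) := by
    simp [dotProduct, Finset.sum_add_distrib]
  rw [e1, e2]
  exact h2

/-- Lyapunov decay for the square-root Riccati limiting system.
If `Σ∞ ≻ 0` solves the ARE `A Σ∞ + Σ∞ Aᵀ + Σ_B - Σ∞ Hᵀ H Σ∞ = 0` with `Σ_B ≻ 0`, then any
solution of `ẏ = (A - ½ Σ∞ Hᵀ H)ᵀ y` satisfies
`yₜᵀ Σ∞ yₜ ≤ e^{-2βt} y₀ᵀ Σ∞ y₀` with `β = λmin(Σ_B)/(2 λmax(Σ∞))`. -/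
theorem stmt0 {d m : ℕ} [NeZero d]
    (A : Matrix (Fin d) (Fin d) ℝ) (H : Matrix (Fin m) (Fin d) ℝ)
    (SB Sinf : Matrix (Fin d) (Fin d) ℝ)
    (hSB : SB.PosDef) (hSinf : Sinf.PosDef)
    (hARE : A * Sinf + Sinf * Aᵀ + SB - Sinf * Hᵀ * H * Sinf = 0)
    (y : ℝ → Fin d → ℝ)
    (hy : ∀ t : ℝ, HasDerivAt y ((A - (1/2 : ℝ) • (Sinf * Hᵀ * H))ᵀ.mulVec (y t)) t) :
    ∀ t : ℝ, 0 ≤ t →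
      y t ⬝ᵥ Sinf.mulVec (y t) ≤
        Real.exp (-2 * ((⨅ i, hSB.1.eigenvalues i) / (2 * ⨆ i, hSinf.1.eigenvalues i)) * t) *
          (y 0 ⬝ᵥ Sinf.mulVec (y 0)) := by
  set M : Matrix (Fin d) (Fin d) ℝ := A - (1/2 : ℝ) • (Sinf * Hᵀ * H) with hM
  have hSinfT : Sinfᵀ = Sinf := by
    rw [← Matrix.conjTranspose_eq_transpose_of_trivial]; exact hSinf.1
  -- key algebraic identity: M Σ + Σ Mᵀ = -SB
  have key : M * Sinf + Sinf * Mᵀ = -SB := by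
    have hT : (Sinf * Hᵀ * H)ᵀ = Hᵀ * H * Sinf := by
      simp [Matrix.transpose_mul, Matrix.mul_assoc, hSinfT]
    rw [hM, Matrix.transpose_sub, Matrix.transpose_smul, hT, Matrix.sub_mul, Matrix.mul_sub,
      Matrix.smul_mul, Matrix.mul_smul]
    have e : Sinf * (Hᵀ * H * Sinf) = Sinf * Hᵀ * H * Sinf := by
      rw [← Matrix.mul_assoc, ← Matrix.mul_assoc]
    rw [e]
    have h0 : (A * Sinf - (1/2:ℝ) • (Sinf*Hᵀ*H*Sinf) + (Sinf * Aᵀ - (1/2:ℝ) • (Sinf*Hᵀ*H*Sinf)))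
        + SB = 0 := by
      calc (A * Sinf - (1/2:ℝ) • (Sinf*Hᵀ*H*Sinf) + (Sinf * Aᵀ - (1/2:ℝ) • (Sinf*Hᵀ*H*Sinf))) + SB
          = A * Sinf + Sinf * Aᵀ + SB - Sinf*Hᵀ*H*Sinf := by module
        _ = 0 := hARE
    exact eq_neg_of_add_eq_zero_left h0
  -- the Lyapunov function and its derivative
  set V : ℝ → ℝ := fun s => y s ⬝ᵥ Sinf.mulVec (y s) with hV
  have hV' : ∀ t : ℝ, HasDerivAt V (-(y t ⬝ᵥ SB.mulVec (y t))) t := by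
    intro t
    have h := hasDerivAt_quadform Sinf (hy t)
    have e : (Mᵀ.mulVec (y t)) ⬝ᵥ Sinf.mulVec (y t) + y t ⬝ᵥ Sinf.mulVec (Mᵀ.mulVec (y t))
        = -(y t ⬝ᵥ SB.mulVec (y t)) := by
      have e1 : (Mᵀ.mulVec (y t)) ⬝ᵥ Sinf.mulVec (y t) = y t ⬝ᵥ ((M * Sinf).mulVec (y t)) := by
        rw [Matrix.mulVec_transpose, ← dotProduct_mulVec, Matrix.mulVec_mulVec]
      have e2 : y t ⬝ᵥ Sinf.mulVec (Mᵀ.mulVec (y t)) = y t ⬝ᵥ ((Sinf * Mᵀ).mulVec (y t)) := by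
        rw [Matrix.mulVec_mulVec]
      rw [e1, e2, ← dotProduct_add, ← Matrix.add_mulVec, key]
      simp [Matrix.neg_mulVec]
    rw [← e]
    exact h
  -- eigenvalue bounds
  obtain ⟨i₀, hi₀⟩ := exists_eq_ciInf_of_finite (f := fun i => hSB.1.eigenvalues i)
  obtain ⟨j₀, hj₀⟩ := exists_eq_ciSup_of_finite (f := fun i => hSinf.1.eigenvalues i)
  have hinf_pos : 0 < ⨅ i, hSB.1.eigenvalues i := hi₀ ▸ hSB.eigenvalues_pos i₀
  have hsup_pos : 0 < ⨆ i, hSinf.1.eigenvalues i := hj₀ ▸ hSinf.eigenvalues_pos j₀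
  set c : ℝ := (⨅ i, hSB.1.eigenvalues i) / (⨆ i, hSinf.1.eigenvalues i) with hc
  have hc_pos : 0 < c := div_pos hinf_pos hsup_pos
  -- differential inequality : c * V t ≤ y t ⬝ SB y t
  have hineq : ∀ t : ℝ, c * V t ≤ y t ⬝ᵥ SB.mulVec (y t) := by
    intro t
    have h1 : c * V t ≤ c * ((⨆ i, hSinf.1.eigenvalues i) * (y t ⬝ᵥ y t)) :=
      mul_le_mul_of_nonneg_left (quad_upper hSinf.1 (y t)) hc_pos.le
    have h2 : c * ((⨆ i, hSinf.1.eigenvalues i) * (y t ⬝ᵥ y t))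
        = (⨅ i, hSB.1.eigenvalues i) * (y t ⬝ᵥ y t) := by
      rw [hc, ← mul_assoc, div_mul_cancel₀ _ hsup_pos.ne']
    exact h1.trans_eq h2 |>.trans (quad_lower hSB.1 (y t))
  -- Gronwall via the function g = exp (c t) * V t
  set g : ℝ → ℝ := fun s => Real.exp (c * s) * V s with hg
  have hg' : ∀ t : ℝ, HasDerivAt g
      (c * Real.exp (c * t) * V t + Real.exp (c * t) * (-(y t ⬝ᵥ SB.mulVec (y t)))) t := by
    intro t
    have hexp : HasDerivAt (fun s => Real.exp (c * s)) (Real.exp (c * t) * c) t := by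
      simpa using ((hasDerivAt_id t).const_mul c).exp
    have := hexp.fun_mul (hV' t)
    exact this.congr_deriv (by ring)
  have hganti : Antitone g := by
    apply antitone_of_deriv_nonpos
    · exact fun t => (hg' t).differentiableAt
    · intro t
      rw [(hg' t).deriv]
      have : c * Real.exp (c * t) * V t + Real.exp (c * t) * (-(y t ⬝ᵥ SB.mulVec (y t)))
          = Real.exp (c * t) * (c * V t - y t ⬝ᵥ SB.mulVec (y t)) := by ring
      rw [this]
      exact mul_nonpos_of_nonneg_of_nonpos (Real.exp_nonneg _) (by linarith [hineq t])
  intro t ht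
  have hgt : g t ≤ g 0 := hganti ht
  have h0 : g 0 = V 0 := by simp [hg]
  have ht' : Real.exp (c * t) * V t ≤ V 0 := by rw [← h0]; exact hgt
  have hexp_pos : (0:ℝ) < Real.exp (c * t) := Real.exp_pos _
  have final : V t ≤ Real.exp (-(c * t)) * V 0 := by
    rw [Real.exp_neg, inv_mul_eq_div]
    rw [le_div_iff₀ hexp_pos]
    linarith [ht']
  have hexp_eq : -2 * ((⨅ i, hSB.1.eigenvalues i) / (2 * ⨆ i, hSinf.1.eigenvalues i)) * t
      = -(c * t) := by
    rw [hc]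
    field_simp
  calc V t ≤ Real.exp (-(c * t)) * V 0 := final
    _ = Real.exp (-2 * ((⨅ i, hSB.1.eigenvalues i) / (2 * ⨆ i, hSinf.1.eigenvalues i)) * t) * V 0 := by
        rw [hexp_eq]
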